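/- Let G₁, G₂ be connected m-uniform hypergraphs. Then c(G₁ □ G₂) = gcd(c(G₁), c(G₂)), where c(H) is the largest divisor ℓ of m such that In(H)x = (m/ℓ)𝟙 has a solution over ℤ/mℤ, and □ is the Cartesian product of m-uniform hypergraphs. -/
import Mathlib


open Matrix

/-- An `m`-uniform hypergraph on the vertex type `V`. -/
structure HG (m : ℕ) (V : Type) where
  edges : Finset (Finset V)
  uniform : ∀ e ∈ edges, e.card = m

namespace HG

variable {m : ℕ} {V : Type}

/-- Two vertices are adjacent if they are distinct and some edge contains both. -/
def adj (G : HG m V) (u v : V) : Prop :=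
  u ≠ v ∧ ∃ e ∈ G.edges, u ∈ e ∧ v ∈ e

/-- A hypergraph is connected if every two vertices are joined by a walk. -/
def Connected (G : HG m V) : Prop :=
  ∀ u v : V, Relation.ReflTransGen G.adj u v

/-- The incidence matrix of `G` over `ZMod m`: rows are edges, columns are vertices,
entry `1` iff the vertex lies in the edge. -/
def inc [DecidableEq V] (G : HG m V) : Matrix {e // e ∈ G.edges} V (ZMod m) :=
  Matrix.of fun e v => if v ∈ e.1 then 1 else 0

/-- The stabilizing index of `G` with respect to a base vertex `v₀`: the number of
solutions `x` of `In(G)·x = 0` over `ZMod m` with `x v₀ = 0`. -/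
noncomputable def stabIndex [DecidableEq V] [Fintype V] (G : HG m V) (v₀ : V) : ℕ :=
  Nat.card {x : V → ZMod m // G.inc.mulVec x = 0 ∧ x v₀ = 0}

/-- The cyclic index of `G`: the largest divisor `ℓ` of `m` such that `G` has an
`(m,ℓ)`-coloring, i.e. a vertex labelling whose sum on each edge is `m/ℓ` mod `m`. -/
noncomputable def cyclicIndex (G : HG m V) : ℕ :=
  sSup {ℓ : ℕ | ℓ ∣ m ∧ ∃ x : V → ZMod m, ∀ e ∈ G.edges, ∑ v ∈ e, x v = ((m / ℓ : ℕ) : ZMod m)}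

end HG

/-- The Cartesian product of two `m`-uniform hypergraphs: an edge is an edge of one
factor in one coordinate, with the other coordinate held constant. -/
def cartProd {m : ℕ} {V₁ V₂ : Type} [DecidableEq V₁] [DecidableEq V₂] [Fintype V₁] [Fintype V₂]
    (G₁ : HG m V₁) (G₂ : HG m V₂) : HG m (V₁ × V₂) where
  edges :=
    (Finset.univ : Finset V₁).biUnion
        (fun u => G₂.edges.image (Finset.image (fun v => (u, v)))) ∪
      (Finset.univ : Finset V₂).biUnion
        (fun v => G₁.edges.image (Finset.image (fun u => (u, v))))
  uniform := by
    intro e he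
    simp only [Finset.mem_union, Finset.mem_biUnion, Finset.mem_image, Finset.mem_univ,
      true_and] at he
    rcases he with ⟨u, f, hf, rfl⟩ | ⟨v, f, hf, rfl⟩
    · rw [Finset.card_image_of_injective _ (fun a b hab => by simpa using hab)]
      exact G₂.uniform f hf
    · rw [Finset.card_image_of_injective _ (fun a b hab => by simpa using hab)]
      exact G₁.uniform f hf


namespace CIProof

variable {m : ℕ} {V : Type}

/-- The set of admissible `ℓ` appearing in the definition of `cyclicIndex`. -/
def SSet (m : ℕ) {V : Type} (G : HG m V) : Set ℕ :=
  {ℓ : ℕ | ℓ ∣ m ∧ ∃ x : V → ZMod m, ∀ e ∈ G.edges, ∑ v ∈ e, x v = ((m / ℓ : ℕ) : ZMod m)}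

lemma one_mem_SSet (G : HG m V) : 1 ∈ SSet m G :=
  ⟨one_dvd m, 0, fun e _ => by simp [ZMod.natCast_self]⟩

lemma bddAbove_SSet (hm : m ≠ 0) (G : HG m V) : BddAbove (SSet m G) :=
  ⟨m, fun ℓ hℓ => Nat.le_of_dvd (Nat.pos_of_ne_zero hm) hℓ.1⟩

lemma sSup_mem_SSet (hm : m ≠ 0) (G : HG m V) : sSup (SSet m G) ∈ SSet m G :=
  Nat.sSup_mem ⟨1, one_mem_SSet G⟩ (bddAbove_SSet hm G)

lemma dvd_mem_SSet (hm : m ≠ 0) {G : HG m V} {ℓ d : ℕ} (hℓ : ℓ ∈ SSet m G) (hd : d ∣ ℓ) :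
    d ∈ SSet m G := by
  obtain ⟨hℓm, x, hx⟩ := hℓ
  have hℓ0 : ℓ ≠ 0 := fun h => hm (by simpa [h] using hℓm)
  refine ⟨hd.trans hℓm, fun v => ((ℓ / d : ℕ) : ZMod m) * x v, fun e he => ?_⟩
  rw [← Finset.mul_sum, hx e he, ← Nat.cast_mul]
  congr 1
  obtain ⟨k, rfl⟩ := hd
  obtain ⟨j, hj⟩ := hℓm
  have hd0 : 0 < d := Nat.pos_of_ne_zero fun h => hℓ0 (by simp [h])
  have hdk0 : 0 < d * k := Nat.pos_of_ne_zero hℓ0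
  rw [hj, Nat.mul_div_cancel_left k hd0, Nat.mul_div_cancel_left j hdk0, mul_assoc,
    Nat.mul_div_cancel_left (k * j) hd0]

lemma gcd_div_eq (hm : m ≠ 0) {a b : ℕ} (ha : a ∣ m) (hb : b ∣ m) :
    Nat.gcd (m / a) (m / b) = m / Nat.lcm a b := by
  have ha0 : a ≠ 0 := fun h => hm (by simpa [h] using ha)
  have hb0 : b ≠ 0 := fun h => hm (by simpa [h] using hb)
  have hg0 : 0 < Nat.gcd a b := Nat.gcd_pos_of_pos_left b (Nat.pos_of_ne_zero ha0)
  have hL : Nat.lcm a b ∣ m := Nat.lcm_dvd ha hb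
  have hL0 : Nat.lcm a b ≠ 0 := Nat.lcm_ne_zero ha0 hb0
  obtain ⟨t, ht⟩ := hL
  have hLa : Nat.lcm a b / a = b / Nat.gcd a b := by
    rw [Nat.lcm, Nat.mul_div_assoc a (Nat.gcd_dvd_right a b),
      Nat.mul_div_cancel_left _ (Nat.pos_of_ne_zero ha0)]
  have hLb : Nat.lcm a b / b = a / Nat.gcd a b := by
    rw [Nat.lcm_comm, Nat.lcm, Nat.mul_div_assoc b (Nat.gcd_dvd_right b a),
      Nat.mul_div_cancel_left _ (Nat.pos_of_ne_zero hb0), Nat.gcd_comm]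
  have hma : m / a = Nat.lcm a b / a * t := by
    obtain ⟨s, hs⟩ := Nat.dvd_lcm_left a b
    rw [ht, hs, Nat.mul_div_cancel_left s (Nat.pos_of_ne_zero ha0), mul_assoc,
      Nat.mul_div_cancel_left (s * t) (Nat.pos_of_ne_zero ha0)]
  have hmb : m / b = Nat.lcm a b / b * t := by
    obtain ⟨s, hs⟩ := Nat.dvd_lcm_right a b
    rw [ht, hs, Nat.mul_div_cancel_left s (Nat.pos_of_ne_zero hb0), mul_assoc,
      Nat.mul_div_cancel_left (s * t) (Nat.pos_of_ne_zero hb0)]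
  have hcop : Nat.Coprime (a / Nat.gcd a b) (b / Nat.gcd a b) :=
    Nat.coprime_div_gcd_div_gcd hg0
  have hmL : m / Nat.lcm a b = t := by
    rw [ht, Nat.mul_div_cancel_left t (Nat.pos_of_ne_zero hL0)]
  rw [hma, hmb, Nat.gcd_mul_right, hLa, hLb, hmL]
  have : Nat.gcd (b / Nat.gcd a b) (a / Nat.gcd a b) = 1 := hcop.symm
  rw [this, one_mul]

lemma lcm_mem_SSet (hm : m ≠ 0) {G : HG m V} {a b : ℕ}
    (ha : a ∈ SSet m G) (hb : b ∈ SSet m G) : Nat.lcm a b ∈ SSet m G := by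
  obtain ⟨ham, x₁, hx₁⟩ := ha
  obtain ⟨hbm, x₂, hx₂⟩ := hb
  refine ⟨Nat.lcm_dvd ham hbm,
    fun v => ((Nat.gcdA (m / a) (m / b) : ℤ) : ZMod m) * x₁ v +
      ((Nat.gcdB (m / a) (m / b) : ℤ) : ZMod m) * x₂ v, fun e he => ?_⟩
  rw [Finset.sum_add_distrib, ← Finset.mul_sum, ← Finset.mul_sum, hx₁ e he, hx₂ e he,
    ← gcd_div_eq hm ham hbm]
  have h := Nat.gcd_eq_gcd_ab (m / a) (m / b)
  have h3 := congrArg (fun z : ℤ => (z : ZMod m)) h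
  simp only [Int.cast_add, Int.cast_mul, Int.cast_natCast] at h3
  rw [h3]
  ring

lemma dvd_sSup_SSet (hm : m ≠ 0) {G : HG m V} {ℓ : ℕ} (h : ℓ ∈ SSet m G) :
    ℓ ∣ sSup (SSet m G) := by
  have hl := lcm_mem_SSet hm h (sSup_mem_SSet hm G)
  have hL0 : 0 < Nat.lcm ℓ (sSup (SSet m G)) :=
    Nat.pos_of_ne_zero fun h0 => hm (by simpa [h0] using hl.1)
  have h1 : Nat.lcm ℓ (sSup (SSet m G)) ≤ sSup (SSet m G) := le_csSup (bddAbove_SSet hm G) hl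
  have h2 : sSup (SSet m G) ≤ Nat.lcm ℓ (sSup (SSet m G)) :=
    Nat.le_of_dvd hL0 (Nat.dvd_lcm_right _ _)
  have heq : Nat.lcm ℓ (sSup (SSet m G)) = sSup (SSet m G) := le_antisymm h1 h2
  exact heq ▸ Nat.dvd_lcm_left _ _

lemma SSet_cartProd {V₁ V₂ : Type} [DecidableEq V₁] [DecidableEq V₂]
    [Fintype V₁] [Fintype V₂] [Nonempty V₁] [Nonempty V₂] (G₁ : HG m V₁) (G₂ : HG m V₂) :
    SSet m (cartProd G₁ G₂) = SSet m G₁ ∩ SSet m G₂ := by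
  have hinj₂ : ∀ u : V₁, Function.Injective (fun v : V₂ => (u, v)) := by
    intro u a b hab; simpa using hab
  have hinj₁ : ∀ v : V₂, Function.Injective (fun u : V₁ => (u, v)) := by
    intro v a b hab; simpa using hab
  ext ℓ
  constructor
  · rintro ⟨hℓm, x, hx⟩
    have v₀ := Classical.arbitrary V₂
    have u₀ := Classical.arbitrary V₁
    constructor
    · refine ⟨hℓm, fun u => x (u, v₀), fun e he => ?_⟩
      have hmem : e.image (fun u => (u, v₀)) ∈ (cartProd G₁ G₂).edges := by
        simp only [cartProd, Finset.mem_union, Finset.mem_biUnion, Finset.mem_image,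
          Finset.mem_univ, true_and]
        exact Or.inr ⟨v₀, e, he, rfl⟩
      have h := hx _ hmem
      rwa [Finset.sum_image fun a _ b _ hab => hinj₁ v₀ hab] at h
    · refine ⟨hℓm, fun v => x (u₀, v), fun e he => ?_⟩
      have hmem : e.image (fun v => (u₀, v)) ∈ (cartProd G₁ G₂).edges := by
        simp only [cartProd, Finset.mem_union, Finset.mem_biUnion, Finset.mem_image,
          Finset.mem_univ, true_and]
        exact Or.inl ⟨u₀, e, he, rfl⟩
      have h := hx _ hmem
      rwa [Finset.sum_image fun a _ b _ hab => hinj₂ u₀ hab] at h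
  · rintro ⟨⟨hℓm, x₁, hx₁⟩, ⟨-, x₂, hx₂⟩⟩
    refine ⟨hℓm, fun p => x₁ p.1 + x₂ p.2, fun e he => ?_⟩
    simp only [cartProd, Finset.mem_union, Finset.mem_biUnion, Finset.mem_image,
      Finset.mem_univ, true_and] at he
    rcases he with ⟨u, f, hf, rfl⟩ | ⟨v, f, hf, rfl⟩
    · rw [Finset.sum_image fun a _ b _ hab => hinj₂ u hab]
      simp only
      rw [Finset.sum_add_distrib, Finset.sum_const, G₂.uniform f hf, hx₂ f hf,
        nsmul_eq_mul, ZMod.natCast_self, zero_mul, zero_add]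
    · rw [Finset.sum_image fun a _ b _ hab => hinj₁ v hab]
      simp only
      rw [Finset.sum_add_distrib, Finset.sum_const, G₁.uniform f hf, hx₁ f hf,
        nsmul_eq_mul, ZMod.natCast_self, zero_mul, add_zero]

end CIProof

/-- **Cyclic index of a Cartesian product.** For connected `m`-uniform hypergraphs `G₁`,
`G₂`, we have `c(G₁ □ G₂) = gcd(c(G₁), c(G₂))`. -/
theorem cyclicIndex_cartProd (m : ℕ) (hm : 2 ≤ m) {V₁ V₂ : Type}
    [DecidableEq V₁] [Fintype V₁] [DecidableEq V₂] [Fintype V₂]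
    (G₁ : HG m V₁) (G₂ : HG m V₂)
    (h₁ : G₁.Connected) (h₂ : G₂.Connected)
    (hn₁ : 2 ≤ Fintype.card V₁) (hn₂ : 2 ≤ Fintype.card V₂) :
    (cartProd G₁ G₂).cyclicIndex = Nat.gcd G₁.cyclicIndex G₂.cyclicIndex := by
  have hm0 : m ≠ 0 := by omega
  have hne₁ : Nonempty V₁ := Fintype.card_pos_iff.mp (by omega)
  have hne₂ : Nonempty V₂ := Fintype.card_pos_iff.mp (by omega)
  show sSup (CIProof.SSet m (cartProd G₁ G₂)) =
    Nat.gcd (sSup (CIProof.SSet m G₁)) (sSup (CIProof.SSet m G₂))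
  have hprod := CIProof.SSet_cartProd (m := m) G₁ G₂
  have hc1 := CIProof.sSup_mem_SSet hm0 G₁
  have hc2 := CIProof.sSup_mem_SSet hm0 G₂
  have hcp := CIProof.sSup_mem_SSet hm0 (cartProd G₁ G₂)
  apply Nat.dvd_antisymm
  · exact Nat.dvd_gcd (CIProof.dvd_sSup_SSet hm0 (hprod.subset hcp).1)
      (CIProof.dvd_sSup_SSet hm0 (hprod.subset hcp).2)
  · have hg1 : Nat.gcd (sSup (CIProof.SSet m G₁)) (sSup (CIProof.SSet m G₂)) ∈
        CIProof.SSet m G₁ := CIProof.dvd_mem_SSet hm0 hc1 (Nat.gcd_dvd_left _ _)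
    have hg2 : Nat.gcd (sSup (CIProof.SSet m G₁)) (sSup (CIProof.SSet m G₂)) ∈
        CIProof.SSet m G₂ := CIProof.dvd_mem_SSet hm0 hc2 (Nat.gcd_dvd_right _ _)
    have : Nat.gcd (sSup (CIProof.SSet m G₁)) (sSup (CIProof.SSet m G₂)) ∈
        CIProof.SSet m (cartProd G₁ G₂) := hprod.symm.subset (Set.mem_inter hg1 hg2)
    exact CIProof.dvd_sSup_SSet hm0 this
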